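/- Let π be a time-varying Markov policy, k ∈ ℕ, and q ∈ Q with q ≠ q_f. Let P_k(q) denote the set of all pairs (j, (q_0,…,q_j)) with 1 ≤ j ≤ k, q_0 = q, q_j = q_f, and q_i ≠ q_f for 0 ≤ i < j, and for each such path let v_p : S → ℝ be its value v_p = T_{q_0→q_1}^{π (k-1) q_0} ( ⋯ ( T_{q_{j-1}→q_j}^{π (k-j) q_{j-1}} 𝟙 ) ⋯ ). Then for every subset P' ⊆ P_k(q) (corresponding to the vertices retained by a pruned subtree) and every s ∈ S, the pruned-tree value is a lower bound on the true value function: ∑_{p ∈ P'} v_p s ≤ V^π k q s. -/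

import Mathlib

open Finset

/-- DFA-informed operator: `(T_{q→q'}^p W) s = ∑_{s'} [τ q s' = q'] · T s (p s) s' · W s'`. -/
def dfaOp {S A Q : Type*} [Fintype S] [DecidableEq Q]
    (T : S → A → S → ℝ) (τ : Q → S → Q) (p : S → A) (q q' : Q)
    (W : S → ℝ) (s : S) : ℝ :=
  ∑ s', (if τ q s' = q' then (1 : ℝ) else 0) * T s (p s) s' * W s'

/-- Value of a DFA path `c = (q_0, …, q_j)`: composition of the DFA-informed
operators along the path applied to the constant-one function `𝟙`, with the first
operator using the policy at time `t`, the next at `t - 1`, and so on. -/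
def pathVal {S A Q : Type*} [Fintype S] [DecidableEq Q]
    (T : S → A → S → ℝ) (τ : Q → S → Q) (π : ℕ → Q → S → A) :
    (j : ℕ) → (Fin (j + 1) → Q) → ℕ → (S → ℝ)
  | 0, _, _ => fun _ => 1
  | j + 1, c, t =>
      dfaOp T τ (π t (c 0)) (c 0) (c 1)
        (pathVal T τ π j (fun i => c i.succ) (t - 1))

lemma sumIcc_one {M : Type*} [AddCommMonoid M] (f : ℕ → M) (n : ℕ) :
    ∑ j ∈ Finset.Icc 1 n, f j = ∑ i ∈ Finset.range n, f (i + 1) := by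
  induction n with
  | zero => simp
  | succ n ih => rw [Finset.sum_Icc_succ_top (by omega), ih, Finset.sum_range_succ]

lemma pathVal_nonneg {S A Q : Type*} [Fintype S] [DecidableEq Q]
    (T : S → A → S → ℝ) (hT0 : ∀ s a s', 0 ≤ T s a s')
    (τ : Q → S → Q) (π : ℕ → Q → S → A) :
    ∀ (j : ℕ) (c : Fin (j + 1) → Q) (t : ℕ) (s : S),
      0 ≤ pathVal T τ π j c t s := by
  intro j
  induction j with
  | zero => intro c t s; simp [pathVal]
  | succ j ih =>
    intro c t s
    unfold pathVal dfaOp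
    apply Finset.sum_nonneg
    intro s' _
    have h1 : (0:ℝ) ≤ (if τ (c 0) s' = c 1 then (1:ℝ) else 0) := by positivity
    exact mul_nonneg (mul_nonneg h1 (hT0 _ _ _)) (ih _ _ _)

lemma stmt8_aux {S A Q : Type*} [Fintype S] [Fintype A] [Fintype Q]
    [DecidableEq Q]
    (T : S → A → S → ℝ)
    (hT0 : ∀ s a s', 0 ≤ T s a s')
    (q_f : Q) (τ : Q → S → Q) (π : ℕ → Q → S → A)
    (V : ℕ → Q → S → ℝ)
    (hV0 : ∀ q s, V 0 q s = if q = q_f then 1 else 0)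
    (hVf : ∀ k s, V (k + 1) q_f s = 1)
    (hVstep : ∀ k q, q ≠ q_f → ∀ s,
      V (k + 1) q s = ∑ s', T s (π k q s) s' * V k (τ q s') s') :
    ∀ (k : ℕ) (q : Q), q ≠ q_f →
    ∀ (P' : (j : ℕ) → Finset (Fin (j + 1) → Q)),
    (∀ j ∈ Finset.Icc 1 k,
      P' j ⊆ Finset.univ.filter (fun c : Fin (j + 1) → Q =>
        c 0 = q ∧ c (Fin.last j) = q_f ∧
          ∀ i : Fin (j + 1), (i : ℕ) < j → c i ≠ q_f)) →
    ∀ s : S,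
      ∑ j ∈ Finset.Icc 1 k, ∑ c ∈ P' j, pathVal T τ π j c (k - 1) s ≤ V k q s := by
  intro k
  induction k with
  | zero =>
    intro q hq P' hP' s
    simp [hV0, hq]
  | succ k ih =>
    intro q hq P' hP' s
    have hVqf : ∀ s' : S, V k q_f s' = 1 := by
      intro s'
      cases k with
      | zero => simp [hV0]
      | succ k => exact hVf k s'
    -- membership facts
    have hmem : ∀ j ∈ Finset.range (k + 1), ∀ c ∈ P' (j + 1),
        c 0 = q ∧ c (Fin.last (j+1)) = q_f ∧
          ∀ i : Fin (j + 2), (i : ℕ) < j + 1 → c i ≠ q_f := by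
      intro j hj c hc
      have hj' : j + 1 ∈ Finset.Icc 1 (k + 1) := by
        simp only [Finset.mem_range] at hj
        simp [Finset.mem_Icc]; omega
      have := hP' (j + 1) hj' hc
      simpa using this
    rw [hVstep k q hq s]
    have hL : ∑ j ∈ Finset.Icc 1 (k+1), ∑ c ∈ P' j, pathVal T τ π j c (k + 1 - 1) s
        = ∑ s', T s (π k q s) s' *
            ∑ j ∈ Finset.range (k+1), ∑ c ∈ P' (j+1),
              (if τ q s' = c 1 then (1:ℝ) else 0) *
                pathVal T τ π j (fun i => c i.succ) (k - 1) s' := by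
      rw [sumIcc_one]
      have h1 : ∀ j ∈ Finset.range (k+1),
          ∑ c ∈ P' (j+1), pathVal T τ π (j+1) c (k + 1 - 1) s
          = ∑ c ∈ P' (j+1), ∑ s',
              (if τ q s' = c 1 then (1:ℝ) else 0) * T s (π k q s) s' *
                pathVal T τ π j (fun i => c i.succ) (k - 1) s' := by
        intro j hj
        apply Finset.sum_congr rfl
        intro c hc
        have hc0 : c 0 = q := (hmem j hj c hc).1
        simp [pathVal, dfaOp, hc0]
      rw [Finset.sum_congr rfl h1]
      have h2 : ∀ j ∈ Finset.range (k+1),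
          (∑ c ∈ P' (j+1), ∑ s',
              (if τ q s' = c 1 then (1:ℝ) else 0) * T s (π k q s) s' *
                pathVal T τ π j (fun i => c i.succ) (k - 1) s')
          = ∑ s', ∑ c ∈ P' (j+1),
              (if τ q s' = c 1 then (1:ℝ) else 0) * T s (π k q s) s' *
                pathVal T τ π j (fun i => c i.succ) (k - 1) s' := by
        intro j _
        exact Finset.sum_comm
      rw [Finset.sum_congr rfl h2, Finset.sum_comm]
      apply Finset.sum_congr rfl
      intro s' _
      rw [Finset.mul_sum]
      apply Finset.sum_congr rfl
      intro j _
      rw [Finset.mul_sum]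
      apply Finset.sum_congr rfl
      intro c _
      ring
    rw [hL]
    apply Finset.sum_le_sum
    intro s' _
    apply mul_le_mul_of_nonneg_left _ (hT0 _ _ _)
    -- key inequality
    by_cases hqf : τ q s' = q_f
    · -- accepting case
      rw [hqf, hVqf s']
      rw [Finset.sum_range_succ']
      have hzero : ∑ i ∈ Finset.range k, ∑ c ∈ P' (i + 1 + 1),
          (if q_f = c 1 then (1:ℝ) else 0) *
            pathVal T τ π (i+1) (fun i' => c i'.succ) (k - 1) s' = 0 := by
        apply Finset.sum_eq_zero
        intro i hi
        apply Finset.sum_eq_zero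
        intro c hc
        have hi' : i + 1 ∈ Finset.range (k+1) := by
          simp only [Finset.mem_range] at hi ⊢; omega
        have h1 := (hmem (i+1) hi' c hc).2.2 1 (by simp)
        rw [if_neg (fun h => h1 h.symm), zero_mul]
      rw [hzero, zero_add]
      -- j = 0 term
      have hsub : P' 1 ⊆ {![q, q_f]} := by
        intro c hc
        have h0 : (1:ℕ) ∈ Finset.Icc 1 (k+1) := by simp
        have := hP' 1 h0 hc
        simp only [Finset.mem_filter, Finset.mem_univ, true_and] at this
        obtain ⟨h1, h2, _⟩ := this
        rw [Finset.mem_singleton]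
        funext i
        fin_cases i
        · simpa using h1
        · simpa using h2
      calc ∑ c ∈ P' 1, (if q_f = c 1 then (1:ℝ) else 0) *
              pathVal T τ π 0 (fun i' => c i'.succ) (k - 1) s'
          ≤ ∑ c ∈ ({![q, q_f]} : Finset (Fin 2 → Q)),
              (if q_f = c 1 then (1:ℝ) else 0) *
                pathVal T τ π 0 (fun i' => c i'.succ) (k - 1) s' := by
            apply Finset.sum_le_sum_of_subset_of_nonneg hsub
            intro c _ _
            have h1 : (0:ℝ) ≤ (if q_f = c 1 then (1:ℝ) else 0) := by positivity
            exact mul_nonneg h1 (pathVal_nonneg T hT0 τ π _ _ _ _)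
        _ ≤ 1 := by
            rw [Finset.sum_singleton]
            simp [pathVal]
    · -- non-accepting case: use inductive hypothesis
      set q' := τ q s' with hq'
      set P'' : (j : ℕ) → Finset (Fin (j + 1) → Q) := fun j =>
        ((P' (j + 1)).filter (fun c => c 1 = q')).image
          (fun c => fun i : Fin (j + 1) => c i.succ) with hP''def
      have hcond : ∀ j ∈ Finset.Icc 1 k,
          P'' j ⊆ Finset.univ.filter (fun c : Fin (j + 1) → Q =>
            c 0 = q' ∧ c (Fin.last j) = q_f ∧
              ∀ i : Fin (j + 1), (i : ℕ) < j → c i ≠ q_f) := by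
        intro j hj c'' hc''
        simp only [hP''def, Finset.mem_image, Finset.mem_filter] at hc''
        obtain ⟨c, ⟨hcP, hc1⟩, rfl⟩ := hc''
        have hjr : j ∈ Finset.range (k+1) := by
          simp only [Finset.mem_Icc] at hj
          simp only [Finset.mem_range]; omega
        obtain ⟨h0, hlast, hmid⟩ := hmem j hjr c hcP
        simp only [Finset.mem_filter, Finset.mem_univ, true_and]
        refine ⟨?_, ?_, ?_⟩
        · rw [Fin.succ_zero_eq_one]; exact hc1
        · rw [Fin.succ_last]; exact hlast
        · intro i hi
          exact hmid i.succ (by simp [Fin.val_succ]; omega)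
      have hIH := ih q' hqf P'' hcond s'
      -- rewrite the pruned sum to match
      have hEq : ∑ j ∈ Finset.range (k+1), ∑ c ∈ P' (j+1),
            (if q' = c 1 then (1:ℝ) else 0) *
              pathVal T τ π j (fun i => c i.succ) (k - 1) s'
          = ∑ j ∈ Finset.Icc 1 k, ∑ c ∈ P'' j, pathVal T τ π j c (k - 1) s' := by
        rw [sumIcc_one, Finset.sum_range_succ']
        have hz : ∑ c ∈ P' (0 + 1),
            (if q' = c 1 then (1:ℝ) else 0) *
              pathVal T τ π 0 (fun i => c i.succ) (k - 1) s' = 0 := by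
          apply Finset.sum_eq_zero
          intro c hc
          have h0 : (1:ℕ) ∈ Finset.Icc 1 (k+1) := by simp
          have := hP' 1 h0 hc
          simp only [Finset.mem_filter, Finset.mem_univ, true_and] at this
          have hlast : c 1 = q_f := by simpa using this.2.1
          rw [if_neg (by rw [hlast]; exact hqf), zero_mul]
        rw [hz, add_zero]
        apply Finset.sum_congr rfl
        intro i hi
        rw [hP''def]
        have hir : i + 1 ∈ Finset.range (k+1) := by
          simp only [Finset.mem_range] at hi ⊢; omega
        rw [Finset.sum_image (fun x hx y hy hxy => by
          simp only [Finset.mem_coe, Finset.mem_filter] at hx hy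
          have hx0 := (hmem (i+1) hir x hx.1).1
          have hy0 := (hmem (i+1) hir y hy.1).1
          funext i0
          refine Fin.cases ?_ ?_ i0
          · rw [hx0, hy0]
          · intro i1
            exact congrFun hxy i1)]
        rw [Finset.sum_filter]
        apply Finset.sum_congr rfl
        intro c _
        by_cases h : c 1 = q'
        · rw [if_pos h, if_pos h.symm, one_mul]
        · rw [if_neg h, if_neg (fun hh => h hh.symm), zero_mul]
      rw [hEq]
      exact hIH

theorem stmt8 {S A Q : Type*} [Fintype S] [Fintype A] [Fintype Q]
    [Nonempty S] [Nonempty A] [Nonempty Q] [DecidableEq Q]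
    (T : S → A → S → ℝ)
    (hT0 : ∀ s a s', 0 ≤ T s a s') (hT1 : ∀ s a, ∑ s', T s a s' = 1)
    (q_f : Q) (τ : Q → S → Q) (π : ℕ → Q → S → A)
    (V : ℕ → Q → S → ℝ)
    (hV0 : ∀ q s, V 0 q s = if q = q_f then 1 else 0)
    (hVf : ∀ k s, V (k + 1) q_f s = 1)
    (hVstep : ∀ k q, q ≠ q_f → ∀ s,
      V (k + 1) q s = ∑ s', T s (π k q s) s' * V k (τ q s') s')
    (k : ℕ) (q : Q) (hq : q ≠ q_f)
    -- `P' j` is the set of retained accepting paths of length `j` from `q`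
    (P' : (j : ℕ) → Finset (Fin (j + 1) → Q))
    (hP' : ∀ j ∈ Finset.Icc 1 k,
      P' j ⊆ Finset.univ.filter (fun c : Fin (j + 1) → Q =>
        c 0 = q ∧ c (Fin.last j) = q_f ∧
          ∀ i : Fin (j + 1), (i : ℕ) < j → c i ≠ q_f)) :
    ∀ s : S,
      ∑ j ∈ Finset.Icc 1 k, ∑ c ∈ P' j, pathVal T τ π j c (k - 1) s ≤ V k q s := by
  exact stmt8_aux T hT0 q_f τ π V hV0 hVf hVstep k q hq P' hP'
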